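/- Monotonicity of the interim belief for binary experiments: let E = ({l,h}, p_L, p_H) be a binary experiment that is strictly informative (p_H(h)·p_L(l) > p_H(l)·p_L(h)) and let n ≥ 2. (i) For α ∈ [0,1] let σ_α be the strategy with σ_α(h) = 1 and σ_α(l) = α; then α ↦ Ψ(σ_α) is strictly increasing on [0,1]. (ii) For β ∈ (0,1] let τ_β be the strategy with τ_β(l) = 0 and τ_β(h) = β; then β ↦ Ψ(τ_β) is strictly decreasing on (0,1]. -/

import Mathlib

open Finset Filter Topology

noncomputable section

/-- Probability that a single buyer rejects the seller, given conditional signal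
distribution `p` and strategy `σ`: `r_θ(σ) = 1 - Σ_s p_θ(s)·σ(s)`. -/
def rej {m : ℕ} (p σ : Fin m → ℝ) : ℝ := 1 - ∑ s, p s * σ s

/-- `ν_θ(σ) = (1/n)·Σ_{k=0}^{n-1} r_θ(σ)^k`: probability of being visited. -/
def visit (n : ℕ) {m : ℕ} (p σ : Fin m → ℝ) : ℝ :=
  (1 / (n : ℝ)) * ∑ k ∈ Finset.range n, rej p σ ^ k

/-- Interim belief `Ψ(σ) = ρ·ν_H(σ) / (ρ·ν_H(σ) + (1-ρ)·ν_L(σ))`. -/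
def interim (ρ : ℝ) (n : ℕ) {m : ℕ} (pL pH σ : Fin m → ℝ) : ℝ :=
  ρ * visit n pH σ / (ρ * visit n pH σ + (1 - ρ) * visit n pL σ)

/-- Posterior belief `Q_ψ(s) = ψ·p_H(s) / (ψ·p_H(s) + (1-ψ)·p_L(s))`. -/
def post {m : ℕ} (ψ : ℝ) (pL pH : Fin m → ℝ) (s : Fin m) : ℝ :=
  ψ * pH s / (ψ * pH s + (1 - ψ) * pL s)

/-- A strategy maps each signal to an acceptance probability in `[0,1]`. -/
def IsStrategy {m : ℕ} (σ : Fin m → ℝ) : Prop := ∀ s, 0 ≤ σ s ∧ σ s ≤ 1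

/-- `σ` is an equilibrium strategy: with `ψ* = Ψ(σ)`, accept for sure when the
posterior exceeds `c`, reject for sure when it falls below `c`. -/
def IsEquilibrium (ρ c : ℝ) (n : ℕ) {m : ℕ} (pL pH σ : Fin m → ℝ) : Prop :=
  IsStrategy σ ∧
  ∀ s : Fin m,
    (c < post (interim ρ n pL pH σ) pL pH s → σ s = 1) ∧
    (post (interim ρ n pL pH σ) pL pH s < c → σ s = 0)

/-- Total surplus `Π(σ) = (1-c)·ρ·(1-r_H(σ)^n) - c·(1-ρ)·(1-r_L(σ)^n)`. -/
def surplus (ρ c : ℝ) (n : ℕ) {m : ℕ} (pL pH σ : Fin m → ℝ) : ℝ :=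
  (1 - c) * ρ * (1 - rej pH σ ^ n) - c * (1 - ρ) * (1 - rej pL σ ^ n)

/-- The most selective equilibrium strategy. -/
def MostSelective (ρ c : ℝ) (n : ℕ) {m : ℕ} (pL pH σ : Fin m → ℝ) : Prop :=
  IsEquilibrium ρ c n pL pH σ ∧
  ∀ σ' : Fin m → ℝ, IsEquilibrium ρ c n pL pH σ' → ∀ s, σ s ≤ σ' s

/-- The least selective equilibrium strategy. -/
def LeastSelective (ρ c : ℝ) (n : ℕ) {m : ℕ} (pL pH σ : Fin m → ℝ) : Prop :=
  IsEquilibrium ρ c n pL pH σ ∧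
  ∀ σ' : Fin m → ℝ, IsEquilibrium ρ c n pL pH σ' → ∀ s, σ' s ≤ σ s

/-- An experiment: `p_L, p_H` are probability mass functions with full joint support,
indexed so that likelihood ratios are nondecreasing. -/
def IsExperiment {m : ℕ} (pL pH : Fin m → ℝ) : Prop :=
  (∀ s, 0 ≤ pL s) ∧ (∀ s, 0 ≤ pH s) ∧
  (∑ s, pL s = 1) ∧ (∑ s, pH s = 1) ∧
  (∀ s, 0 < pL s + pH s) ∧
  (∀ i j : Fin m, i ≤ j → pH i * pL j ≤ pH j * pL i)

/-- A strategy is monotone: a positive acceptance probability at `s_i` forces sure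
acceptance at every signal with strictly higher likelihood ratio. -/
def MonotoneStrategy {m : ℕ} (pL pH σ : Fin m → ℝ) : Prop :=
  ∀ i j : Fin m, 0 < σ i → pH i * pL j < pH j * pL i → σ j = 1


/-! ### Auxiliary lemmas -/

lemma Spos' (r : ℝ) (hr : 0 ≤ r) (n : ℕ) (hn : 0 < n) :
    0 < ∑ k ∈ Finset.range n, r ^ k :=
  Finset.sum_pos' (fun k _ => pow_nonneg hr k) ⟨0, Finset.mem_range.2 hn, by norm_num⟩

lemma sum_kpow' (r : ℝ) (n : ℕ) :
    ∑ k ∈ Finset.range n, (k:ℝ) * r ^ k = r * ∑ k ∈ Finset.range n, (k:ℝ) * r ^ (k-1) := by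
  rw [Finset.mul_sum]
  refine Finset.sum_congr rfl fun k _ => ?_
  cases k with
  | zero => simp
  | succ m => rw [Nat.succ_sub_one]; push_cast; ring

lemma ident' (r : ℝ) (n : ℕ) :
    (∑ k ∈ Finset.range n, r ^ k) - (1 - r) * (∑ k ∈ Finset.range n, (k:ℝ) * r ^ (k-1))
      = (n:ℝ) * r ^ (n-1) := by
  have tele := Finset.sum_range_sub (fun k => (k:ℝ) * r ^ (k-1)) n
  have step : ∀ k : ℕ, ((k+1:ℕ):ℝ) * r ^ ((k+1)-1) - (k:ℝ) * r ^ (k-1)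
      = r ^ k - (1-r) * ((k:ℝ) * r ^ (k-1)) := by
    intro k
    cases k with
    | zero => simp
    | succ m => rw [Nat.succ_sub_one, Nat.succ_sub_one]; push_cast; ring
  calc (∑ k ∈ Finset.range n, r ^ k) - (1 - r) * (∑ k ∈ Finset.range n, (k:ℝ) * r ^ (k-1))
      = ∑ k ∈ Finset.range n, (r ^ k - (1-r) * ((k:ℝ) * r ^ (k-1))) := by
        rw [Finset.sum_sub_distrib, Finset.mul_sum]
    _ = ∑ k ∈ Finset.range n, (((k+1:ℕ):ℝ) * r ^ ((k+1)-1) - (k:ℝ) * r ^ (k-1)) :=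
        Finset.sum_congr rfl fun k _ => (step k).symm
    _ = (n:ℝ) * r ^ (n-1) := by rw [tele]; simp

lemma powmix (u v : ℝ) (hv : 0 ≤ v) (huv : v ≤ u) {j k : ℕ} (hjk : j ≤ k) :
    u ^ j * v ^ k ≤ u ^ k * v ^ j := by
  obtain ⟨d, rfl⟩ := Nat.exists_eq_add_of_le hjk
  have hu : 0 ≤ u := hv.trans huv
  rw [pow_add, pow_add]
  have h1 : v ^ d ≤ u ^ d := pow_le_pow_left₀ hv huv d
  have h2 : 0 ≤ u ^ j * v ^ j := mul_nonneg (pow_nonneg hu j) (pow_nonneg hv j)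
  nlinarith [h1, h2]

lemma keyI (n : ℕ) (hn : 2 ≤ n) (u v : ℝ) (hv : 0 ≤ v) (huv : v < u) :
    (∑ k ∈ Finset.range n, (k:ℝ) * v ^ k) * (∑ k ∈ Finset.range n, u ^ k)
      < (∑ k ∈ Finset.range n, (k:ℝ) * u ^ k) * (∑ k ∈ Finset.range n, v ^ k) := by
  have expand : ∀ x y : ℝ,
      (∑ j ∈ Finset.range n, (j:ℝ) * x ^ j) * (∑ k ∈ Finset.range n, y ^ k)
        = ∑ j ∈ Finset.range n, ∑ k ∈ Finset.range n, (j:ℝ) * x ^ j * y ^ k := by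
    intro x y
    rw [Finset.sum_mul]
    exact Finset.sum_congr rfl fun j _ => by rw [Finset.mul_sum]
  rw [expand, expand, ← sub_pos]
  have hcomm : ∑ j ∈ Finset.range n, ∑ k ∈ Finset.range n, (j:ℝ) * v ^ j * u ^ k
      = ∑ j ∈ Finset.range n, ∑ k ∈ Finset.range n, (k:ℝ) * v ^ k * u ^ j :=
    Finset.sum_comm
  have hAB : (∑ j ∈ Finset.range n, ∑ k ∈ Finset.range n, (j:ℝ) * u ^ j * v ^ k)
      - (∑ j ∈ Finset.range n, ∑ k ∈ Finset.range n, (j:ℝ) * v ^ j * u ^ k)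
      = ∑ j ∈ Finset.range n, ∑ k ∈ Finset.range n, ((j:ℝ) - k) * (u ^ j * v ^ k) := by
    rw [hcomm, ← Finset.sum_sub_distrib]
    refine Finset.sum_congr rfl fun j _ => ?_
    rw [← Finset.sum_sub_distrib]
    exact Finset.sum_congr rfl fun k _ => by ring
  have hswap : ∑ j ∈ Finset.range n, ∑ k ∈ Finset.range n, ((j:ℝ) - k) * (u ^ j * v ^ k)
      = ∑ j ∈ Finset.range n, ∑ k ∈ Finset.range n, ((k:ℝ) - j) * (u ^ k * v ^ j) :=
    Finset.sum_comm
  have hterm : ∀ j k : ℕ, 0 ≤ ((j:ℝ) - k) * (u ^ j * v ^ k - u ^ k * v ^ j) := by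
    intro j k
    rcases le_total j k with h | h
    · have h1 : ((j:ℝ) - k) ≤ 0 := by simp [sub_nonpos, Nat.cast_le, h]
      have h2 : u ^ j * v ^ k - u ^ k * v ^ j ≤ 0 := sub_nonpos.2 (powmix u v hv huv.le h)
      nlinarith [h1, h2]
    · exact mul_nonneg
        (by simp [sub_nonneg, Nat.cast_le, h])
        (sub_nonneg.2 (powmix u v hv huv.le h))
  have hpos : 0 < ∑ j ∈ Finset.range n, ∑ k ∈ Finset.range n,
      ((j:ℝ) - k) * (u ^ j * v ^ k - u ^ k * v ^ j) := by
    refine Finset.sum_pos' (fun j _ => Finset.sum_nonneg fun k _ => hterm j k) ⟨1, ?_, ?_⟩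
    · exact Finset.mem_range.2 (by omega)
    · refine Finset.sum_pos' (fun k _ => hterm 1 k) ⟨0, Finset.mem_range.2 (by omega), ?_⟩
      simp only [pow_zero, pow_one]
      push_cast
      nlinarith [huv]
  have h2 : 2 * ((∑ j ∈ Finset.range n, ∑ k ∈ Finset.range n, (j:ℝ) * u ^ j * v ^ k)
      - (∑ j ∈ Finset.range n, ∑ k ∈ Finset.range n, (j:ℝ) * v ^ j * u ^ k))
      = ∑ j ∈ Finset.range n, ∑ k ∈ Finset.range n,
          ((j:ℝ) - k) * (u ^ j * v ^ k - u ^ k * v ^ j) := by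
    rw [hAB, two_mul]
    nth_rewrite 2 [hswap]
    rw [← Finset.sum_add_distrib]
    refine Finset.sum_congr rfl fun j _ => ?_
    rw [← Finset.sum_add_distrib]
    exact Finset.sum_congr rfl fun k _ => by ring
  linarith

lemma keyII (n : ℕ) (hn : 2 ≤ n) (u v : ℝ) (hv : 0 ≤ v) (huv : v < u) :
    v ^ (n-1) * (∑ k ∈ Finset.range n, u ^ k)
      < u ^ (n-1) * (∑ k ∈ Finset.range n, v ^ k) := by
  rw [Finset.mul_sum, Finset.mul_sum]
  refine Finset.sum_lt_sum (fun k hk => ?_) ⟨0, Finset.mem_range.2 (by omega), ?_⟩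
  · have hk' : k ≤ n - 1 := by have := Finset.mem_range.1 hk; omega
    have := powmix u v hv huv.le hk'
    nlinarith [this]
  · simp only [pow_zero, mul_one]
    exact pow_lt_pow_left₀ huv hv (by omega)

lemma hasDeriv_S (n : ℕ) (a b x : ℝ) :
    HasDerivAt (fun y => ∑ k ∈ Finset.range n, (a - b*y)^k)
      (-b * ∑ k ∈ Finset.range n, (k:ℝ) * (a - b*x)^(k-1)) x := by
  have hinner : HasDerivAt (fun y : ℝ => a - b*y) (-b) x := by
    simpa using ((hasDerivAt_id x).const_mul b).const_sub a
  have hsum := HasDerivAt.fun_sum (fun k (_ : k ∈ Finset.range n) => hinner.fun_pow k)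
  refine hsum.congr_deriv ?_
  rw [Finset.mul_sum]
  exact Finset.sum_congr rfl fun k _ => by ring

lemma contS (n : ℕ) (a b : ℝ) : Continuous (fun y : ℝ => ∑ k ∈ Finset.range n, (a - b*y)^k) :=
  continuous_finset_sum _ fun k _ =>
    ((continuous_const.sub (continuous_const.mul continuous_id)).pow k)

lemma core1 (n : ℕ) (hn : 2 ≤ n) (p q : ℝ) (hp : 0 ≤ p) (hpq : p < q) :
    StrictAntiOn (fun α => (∑ k ∈ Finset.range n, (q - q*α)^k)
      / (∑ k ∈ Finset.range n, (p - p*α)^k)) (Set.Icc 0 1) := by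
  have hn0 : 0 < n := by omega
  have hSH : ∀ x ∈ Set.Icc (0:ℝ) 1, 0 < ∑ k ∈ Finset.range n, (p - p*x)^k := by
    intro x hx
    exact Spos' _ (by nlinarith [mul_nonneg hp (sub_nonneg.2 hx.2)]) n hn0
  apply strictAntiOn_of_deriv_neg (convex_Icc 0 1)
  · exact ContinuousOn.div (contS n q q).continuousOn (contS n p p).continuousOn
      (fun x hx => (hSH x hx).ne')
  · intro x hx
    rw [interior_Icc] at hx
    obtain ⟨hx0, hx1⟩ := hx
    have hne : (∑ k ∈ Finset.range n, (p - p*x)^k) ≠ 0 :=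
      (hSH x ⟨hx0.le, hx1.le⟩).ne'
    have hdiv := (hasDeriv_S n q q x).fun_div (hasDeriv_S n p p x) hne
    rw [hdiv.deriv]
    apply div_neg_of_neg_of_pos _ (pow_pos (hSH x ⟨hx0.le, hx1.le⟩) 2)
    have hvnn : 0 ≤ p - p*x := by nlinarith [mul_nonneg hp (sub_nonneg.2 hx1.le)]
    have huv : p - p*x < q - q*x := by nlinarith [hpq, hx1]
    have hkey := keyI n hn (q - q*x) (p - p*x) hvnn huv
    rw [sum_kpow' (q - q*x) n, sum_kpow' (p - p*x) n] at hkey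
    have ht : 0 < 1 - x := by linarith
    set Du := ∑ k ∈ Finset.range n, (k:ℝ) * (q - q*x)^(k-1) with hDu
    set Dv := ∑ k ∈ Finset.range n, (k:ℝ) * (p - p*x)^(k-1) with hDv
    set Su := ∑ k ∈ Finset.range n, (q - q*x)^k with hSu
    set Sv := ∑ k ∈ Finset.range n, (p - p*x)^k with hSv
    have h5 : (1-x) * ((-q * Du) * Sv - Su * (-p * Dv))
        = ((p - p*x) * Dv) * Su - ((q - q*x) * Du) * Sv := by ring
    nlinarith [hkey, ht, h5]

lemma core2 (n : ℕ) (hn : 2 ≤ n) (Q P : ℝ) (hQ : 0 ≤ Q) (hQP : Q < P) (hP : P ≤ 1) :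
    StrictMonoOn (fun β => (∑ k ∈ Finset.range n, (1 - Q*β)^k)
      / (∑ k ∈ Finset.range n, (1 - P*β)^k)) (Set.Icc 0 1) := by
  have hn0 : 0 < n := by omega
  have hSH : ∀ x ∈ Set.Icc (0:ℝ) 1, 0 < ∑ k ∈ Finset.range n, (1 - P*x)^k := by
    intro x hx
    refine Spos' _ ?_ n hn0
    nlinarith [mul_le_one₀ hP hx.1 hx.2]
  apply strictMonoOn_of_deriv_pos (convex_Icc 0 1)
  · exact ContinuousOn.div (contS n 1 Q).continuousOn (contS n 1 P).continuousOn
      (fun x hx => (hSH x hx).ne')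
  · intro x hx
    rw [interior_Icc] at hx
    obtain ⟨hx0, hx1⟩ := hx
    have hne : (∑ k ∈ Finset.range n, (1 - P*x)^k) ≠ 0 :=
      (hSH x ⟨hx0.le, hx1.le⟩).ne'
    have hdiv := (hasDeriv_S n 1 Q x).fun_div (hasDeriv_S n 1 P x) hne
    rw [hdiv.deriv]
    apply div_pos _ (pow_pos (hSH x ⟨hx0.le, hx1.le⟩) 2)
    have hvnn : 0 ≤ 1 - P*x := by nlinarith [mul_le_one₀ hP hx0.le hx1.le]
    have huv : 1 - P*x < 1 - Q*x := by nlinarith [hQP, hx0]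
    have hkey := keyII n hn (1 - Q*x) (1 - P*x) hvnn huv
    set DL := ∑ k ∈ Finset.range n, (k:ℝ) * (1 - Q*x)^(k-1) with hDL
    set DH := ∑ k ∈ Finset.range n, (k:ℝ) * (1 - P*x)^(k-1) with hDH
    set SL := ∑ k ∈ Finset.range n, (1 - Q*x)^k with hSL
    set SH := ∑ k ∈ Finset.range n, (1 - P*x)^k with hSH2
    have e1 : Q*x*DL = SL - (n:ℝ) * (1 - Q*x)^(n-1) := by
      linear_combination (-1 : ℝ) * ident' (1 - Q*x) n
    have e2 : P*x*DH = SH - (n:ℝ) * (1 - P*x)^(n-1) := by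
      linear_combination (-1 : ℝ) * ident' (1 - P*x) n
    have h5 : x * ((-Q * DL) * SH - SL * (-P * DH))
        = ((n:ℝ) * ((1 - Q*x)^(n-1) * SH) - (n:ℝ) * ((1 - P*x)^(n-1) * SL)) := by
      linear_combination (-SH) * e1 + SL * e2
    have hnpos : (0:ℝ) < n := by exact_mod_cast hn0
    nlinarith [hkey, h5, hx0, hnpos]

lemma interim_aux (ρ νH νL νH' νL' : ℝ) (hρ0 : 0 < ρ) (hρ1 : ρ < 1)
    (h1 : 0 < νH) (h2 : 0 < νL) (h3 : 0 < νH') (h4 : 0 < νL')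
    (key : νH * νL' < νH' * νL) :
    ρ * νH / (ρ * νH + (1-ρ) * νL) < ρ * νH' / (ρ * νH' + (1-ρ) * νL') := by
  have d1 : 0 < ρ * νH + (1-ρ) * νL := add_pos (mul_pos hρ0 h1) (mul_pos (sub_pos.2 hρ1) h2)
  have d2 : 0 < ρ * νH' + (1-ρ) * νL' := add_pos (mul_pos hρ0 h3) (mul_pos (sub_pos.2 hρ1) h4)
  rw [div_lt_div_iff₀ d1 d2]
  nlinarith [mul_pos hρ0 (sub_pos.mpr hρ1), key]

lemma rej_hi (f : Fin 2 → ℝ) (hf : f 0 + f 1 = 1) (c : ℝ) :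
    rej f (fun s => if s = 0 then c else 1) = f 0 - f 0 * c := by
  simp [rej, Fin.sum_univ_two, show (1:Fin 2) ≠ 0 by decide]
  linarith

lemma rej_lo (f : Fin 2 → ℝ) (c : ℝ) :
    rej f (fun s => if s = 0 then 0 else c) = 1 - f 1 * c := by
  simp [rej, Fin.sum_univ_two, show (1:Fin 2) ≠ 0 by decide]

set_option maxHeartbeats 1600000 in
/-- monotonicity of the interim belief for a strictly informative binary
experiment (`0` is the low signal, `1` the high signal) with `n ≥ 2` buyers.
(i) With sure acceptance on the high signal, the interim belief strictly increases in
the acceptance probability on the low signal. (ii) With sure rejection on the low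
signal, the interim belief strictly decreases in the acceptance probability on the
high signal (over `(0,1]`). -/
theorem interim_belief_monotone_binary
    (ρ : ℝ) (hρ : ρ ∈ Set.Ioo (0:ℝ) 1)
    (n : ℕ) (hn : 2 ≤ n)
    (pL pH : Fin 2 → ℝ) (hE : IsExperiment pL pH)
    (hstrict : pH 0 * pL 1 < pH 1 * pL 0) :
    (∀ a b : ℝ, 0 ≤ a → a < b → b ≤ 1 →
      interim ρ n pL pH (fun s => if s = 0 then a else 1) <
        interim ρ n pL pH (fun s => if s = 0 then b else 1)) ∧
    (∀ a b : ℝ, 0 < a → a < b → b ≤ 1 →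
      interim ρ n pL pH (fun s => if s = 0 then 0 else b) <
        interim ρ n pL pH (fun s => if s = 0 then 0 else a)) := by
  obtain ⟨hρ0, hρ1⟩ := hρ
  obtain ⟨hL0, hH0, hLsum, hHsum, hposj, hmono⟩ := hE
  have hLs : pL 0 + pL 1 = 1 := (Fin.sum_univ_two pL).symm.trans hLsum
  have hHs : pH 0 + pH 1 = 1 := (Fin.sum_univ_two pH).symm.trans hHsum
  have eL : pL 1 = 1 - pL 0 := by linarith
  have eH : pH 1 = 1 - pH 0 := by linarith
  have hpq : pH 0 < pL 0 := by
    rw [eL, eH] at hstrict; nlinarith [hstrict]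
  have hn0 : 0 < n := by omega
  have hninv : 0 < (1:ℝ)/n := by positivity
  constructor
  · -- part (i)
    intro a b ha hab hb1
    have ha1 : a ≤ 1 := by linarith
    have hb0 : 0 ≤ b := by linarith
    have hrHa : rej pH (fun s => if s = 0 then a else 1) = pH 0 - pH 0 * a := rej_hi pH hHs a
    have hrHb : rej pH (fun s => if s = 0 then b else 1) = pH 0 - pH 0 * b := rej_hi pH hHs b
    have hrLa : rej pL (fun s => if s = 0 then a else 1) = pL 0 - pL 0 * a := rej_hi pL hLs a
    have hrLb : rej pL (fun s => if s = 0 then b else 1) = pL 0 - pL 0 * b := rej_hi pL hLs b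
    have vHa : visit n pH (fun s => if s = 0 then a else 1)
        = (1/(n:ℝ)) * ∑ k ∈ Finset.range n, (pH 0 - pH 0 * a)^k := by
      unfold visit; rw [hrHa]
    have vHb : visit n pH (fun s => if s = 0 then b else 1)
        = (1/(n:ℝ)) * ∑ k ∈ Finset.range n, (pH 0 - pH 0 * b)^k := by
      unfold visit; rw [hrHb]
    have vLa : visit n pL (fun s => if s = 0 then a else 1)
        = (1/(n:ℝ)) * ∑ k ∈ Finset.range n, (pL 0 - pL 0 * a)^k := by
      unfold visit; rw [hrLa]
    have vLb : visit n pL (fun s => if s = 0 then b else 1)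
        = (1/(n:ℝ)) * ∑ k ∈ Finset.range n, (pL 0 - pL 0 * b)^k := by
      unfold visit; rw [hrLb]
    have nnHa : 0 ≤ pH 0 - pH 0 * a := by nlinarith [mul_nonneg (hH0 0) (sub_nonneg.2 ha1)]
    have nnHb : 0 ≤ pH 0 - pH 0 * b := by nlinarith [mul_nonneg (hH0 0) (sub_nonneg.2 hb1)]
    have nnLa : 0 ≤ pL 0 - pL 0 * a := by nlinarith [mul_nonneg (hL0 0) (sub_nonneg.2 ha1)]
    have nnLb : 0 ≤ pL 0 - pL 0 * b := by nlinarith [mul_nonneg (hL0 0) (sub_nonneg.2 hb1)]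
    have hSHa := Spos' _ nnHa n hn0
    have hSHb := Spos' _ nnHb n hn0
    have hSLa := Spos' _ nnLa n hn0
    have hSLb := Spos' _ nnLb n hn0
    have hratio := core1 n hn (pH 0) (pL 0) (hH0 0) hpq ⟨ha, ha1⟩ ⟨hb0, hb1⟩ hab
    simp only at hratio
    rw [div_lt_div_iff₀ hSHb hSHa] at hratio
    have key : visit n pH (fun s => if s = 0 then a else 1)
          * visit n pL (fun s => if s = 0 then b else 1)
        < visit n pH (fun s => if s = 0 then b else 1)
          * visit n pL (fun s => if s = 0 then a else 1) := by
      rw [vHa, vLb, vHb, vLa]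
      nlinarith [mul_pos hninv hninv, hratio]
    unfold interim
    exact interim_aux ρ _ _ _ _ hρ0 hρ1
      (vHa ▸ mul_pos hninv hSHa) (vLa ▸ mul_pos hninv hSLa)
      (vHb ▸ mul_pos hninv hSHb) (vLb ▸ mul_pos hninv hSLb) key
  · -- part (ii)
    intro a b ha0 hab hb1
    have ha1 : a ≤ 1 := by linarith
    have ha : 0 ≤ a := ha0.le
    have hb0 : 0 ≤ b := by linarith
    have hQP : pL 1 < pH 1 := by rw [eL, eH]; linarith
    have hP1 : pH 1 ≤ 1 := by linarith [hH0 0]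
    have hrHa : rej pH (fun s => if s = 0 then 0 else a) = 1 - pH 1 * a := rej_lo pH a
    have hrHb : rej pH (fun s => if s = 0 then 0 else b) = 1 - pH 1 * b := rej_lo pH b
    have hrLa : rej pL (fun s => if s = 0 then 0 else a) = 1 - pL 1 * a := rej_lo pL a
    have hrLb : rej pL (fun s => if s = 0 then 0 else b) = 1 - pL 1 * b := rej_lo pL b
    have vHa : visit n pH (fun s => if s = 0 then 0 else a)
        = (1/(n:ℝ)) * ∑ k ∈ Finset.range n, (1 - pH 1 * a)^k := by
      unfold visit; rw [hrHa]
    have vHb : visit n pH (fun s => if s = 0 then 0 else b)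
        = (1/(n:ℝ)) * ∑ k ∈ Finset.range n, (1 - pH 1 * b)^k := by
      unfold visit; rw [hrHb]
    have vLa : visit n pL (fun s => if s = 0 then 0 else a)
        = (1/(n:ℝ)) * ∑ k ∈ Finset.range n, (1 - pL 1 * a)^k := by
      unfold visit; rw [hrLa]
    have vLb : visit n pL (fun s => if s = 0 then 0 else b)
        = (1/(n:ℝ)) * ∑ k ∈ Finset.range n, (1 - pL 1 * b)^k := by
      unfold visit; rw [hrLb]
    have nnHa : 0 ≤ 1 - pH 1 * a := by nlinarith [mul_le_one₀ hP1 ha ha1]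
    have nnHb : 0 ≤ 1 - pH 1 * b := by nlinarith [mul_le_one₀ hP1 hb0 hb1]
    have nnLa : 0 ≤ 1 - pL 1 * a := by
      nlinarith [mul_le_one₀ (by linarith [hL0 0] : pL 1 ≤ 1) ha ha1]
    have nnLb : 0 ≤ 1 - pL 1 * b := by
      nlinarith [mul_le_one₀ (by linarith [hL0 0] : pL 1 ≤ 1) hb0 hb1]
    have hSHa := Spos' _ nnHa n hn0
    have hSHb := Spos' _ nnHb n hn0
    have hSLa := Spos' _ nnLa n hn0
    have hSLb := Spos' _ nnLb n hn0
    have hratio := core2 n hn (pL 1) (pH 1) (hL0 1) hQP hP1 ⟨ha, ha1⟩ ⟨hb0, hb1⟩ hab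
    simp only at hratio
    rw [div_lt_div_iff₀ hSHa hSHb] at hratio
    have key : visit n pH (fun s => if s = 0 then 0 else b)
          * visit n pL (fun s => if s = 0 then 0 else a)
        < visit n pH (fun s => if s = 0 then 0 else a)
          * visit n pL (fun s => if s = 0 then 0 else b) := by
      rw [vHb, vLa, vHa, vLb]
      nlinarith [mul_pos hninv hninv, hratio]
    unfold interim
    exact interim_aux ρ _ _ _ _ hρ0 hρ1
      (vHb ▸ mul_pos hninv hSHb) (vLb ▸ mul_pos hninv hSLb)
      (vHa ▸ mul_pos hninv hSHa) (vLa ▸ mul_pos hninv hSLa) key
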